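/- Let f be a polymorphism of (1in3, T1) of arity n with f(∅) = 1. Then f has a 2-set of size at most 2; that is, there exists X ⊆ [n] with |X| ≤ 2 and f(X) = 2. -/

import Mathlib

set_option maxHeartbeats 1000000 in
lemma trip {a b c x y z : ℕ} (h : ({a,b,c} : Multiset ℕ) = {x,y,z}) :
    (a=x∧b=y∧c=z)∨(a=x∧b=z∧c=y)∨(a=y∧b=x∧c=z)∨(a=y∧b=z∧c=x)∨(a=z∧b=x∧c=y)∨(a=z∧b=y∧c=x) := by
  simp only [Multiset.insert_eq_cons, Multiset.cons_eq_cons, Multiset.singleton_eq_cons_iff,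
    Multiset.singleton_inj, ne_eq] at h
  obtain ⟨ha, ⟨hb, hc⟩ | ⟨hb, cs, ⟨hc, h0⟩, hz, h0'⟩⟩ | ⟨ha, cs, hb, hc⟩ := h
  · tauto
  · tauto
  · rcases hb with ⟨hb, hcs⟩ | ⟨hb, cs1, ⟨hc1, h0⟩, hcs⟩ <;>
    rcases hc with ⟨hy, hzz⟩ | ⟨hz, cs2, ⟨hza, h02⟩, hcs2⟩ <;>
      subst_vars <;>
      simp_all [Multiset.cons_eq_cons, Multiset.singleton_eq_cons_iff, eq_comm]

/-- `f` is a polymorphism of `(1in3, B)` where `B` has relation `R`: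
for every partition of `[n]` into three pairwise disjoint blocks `X, Y, Z`,
the triple of values is in `R`. -/
def IsPolymorphism {n : ℕ} {B : Type*} (R : B → B → B → Prop) (f : Finset (Fin n) → B) : Prop :=
  ∀ X Y Z : Finset (Fin n), Disjoint X Y → Disjoint X Z → Disjoint Y Z →
    X ∪ Y ∪ Z = Finset.univ → R (f X) (f Y) (f Z)

/-- The relation of `relT1`: all coordinate permutations of (0,0,1), (0,0,2), (1,1,2). -/
def relT1 (a b c : ℕ) : Prop :=
  ({a, b, c} : Multiset ℕ) = {0, 0, 1} ∨ ({a, b, c} : Multiset ℕ) = {0, 0, 2} ∨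
    ({a, b, c} : Multiset ℕ) = {1, 1, 2}

lemma relT1_elim {a b c : ℕ} (h : relT1 a b c) :
    (a=0∧b=0∧c=1)∨(a=0∧b=1∧c=0)∨(a=1∧b=0∧c=0)∨
    (a=0∧b=0∧c=2)∨(a=0∧b=2∧c=0)∨(a=2∧b=0∧c=0)∨
    (a=1∧b=1∧c=2)∨(a=1∧b=2∧c=1)∨(a=2∧b=1∧c=1) := by
  rcases h with h|h|h
  · have h2 := trip (x:=0) (y:=0) (z:=1) h
    clear h
    obtain h|h|h|h|h|h := h2 <;> obtain ⟨rfl,rfl,rfl⟩ := h <;> decide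
  · have h2 := trip (x:=0) (y:=0) (z:=2) h
    clear h
    obtain h|h|h|h|h|h := h2 <;> obtain ⟨rfl,rfl,rfl⟩ := h <;> decide
  · have h2 := trip (x:=1) (y:=1) (z:=2) h
    clear h
    obtain h|h|h|h|h|h := h2 <;> obtain ⟨rfl,rfl,rfl⟩ := h <;> decide

theorem stmt_13 (n : ℕ) (hn : 1 ≤ n) (f : Finset (Fin n) → ℕ) (hf : IsPolymorphism relT1 f)
    (h1 : f ∅ = 1) :
    ∃ X : Finset (Fin n), X.card ≤ 2 ∧ f X = 2 := by
  classical
  have pair : ∀ A : Finset (Fin n), relT1 (f A) (f Aᶜ) 1 := by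
    intro A
    have := hf A Aᶜ ∅ disjoint_compl_right (Finset.disjoint_empty_right A)
      (Finset.disjoint_empty_right Aᶜ) (by simp)
    simpa [h1] using this
  have huniv : f Finset.univ = 2 := by
    have h := hf ∅ ∅ Finset.univ (by simp) (by simp) (by simp) (by simp)
    rw [h1] at h
    have := relT1_elim h; omega
  obtain ⟨X, hXmem, hXmin⟩ := Finset.exists_min_image
    (Finset.univ.filter fun A => f A = 2) Finset.card ⟨Finset.univ, by simp [huniv]⟩
  simp only [Finset.mem_filter, Finset.mem_univ, true_and] at hXmem hXmin
  by_cases hc : X.card ≤ 2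
  · exact ⟨X, hc, hXmem⟩
  exfalso
  push_neg at hc
  have hXc1 : f Xᶜ = 1 := by
    have h := pair X
    rw [hXmem] at h
    have := relT1_elim h; omega
  have sub0 : ∀ Y : Finset (Fin n), Y ⊆ X → Y.Nonempty → Y.card < X.card → f Y = 0 := by
    intro Y hYX hYne hYlt
    have hd1 : Disjoint Y (X \ Y) := Finset.disjoint_sdiff
    have hd2 : Disjoint Y Xᶜ := Finset.disjoint_left.mpr
      (fun a ha hac => (Finset.mem_compl.mp hac) (hYX ha))
    have hd3 : Disjoint (X \ Y) Xᶜ := Finset.disjoint_left.mpr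
      (fun a ha hac => (Finset.mem_compl.mp hac) (Finset.mem_sdiff.mp ha).1)
    have hu : Y ∪ (X \ Y) ∪ Xᶜ = Finset.univ := by
      rw [Finset.union_sdiff_of_subset hYX, Finset.union_compl]
    have h := hf Y (X \ Y) Xᶜ hd1 hd2 hd3 hu
    rw [hXc1] at h
    have hY2 : f Y ≠ 2 := fun h2 => absurd (hXmin Y (by simp [h2])) (by omega)
    have hXY2 : f (X \ Y) ≠ 2 := by
      intro h2
      have hcard : (X \ Y).card < X.card := by
        rw [Finset.card_sdiff_of_subset hYX]
        have := Finset.card_le_card hYX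
        have := hYne.card_pos
        omega
      exact absurd (hXmin (X \ Y) (by simp [h2])) (by omega)
    have := relT1_elim h; omega
  obtain ⟨x, hx, y, hy, hxy⟩ := Finset.one_lt_card.mp (show 1 < X.card by omega)
  have hfx : f {x} = 0 := sub0 {x} (Finset.singleton_subset_iff.mpr hx) ⟨x, by simp⟩
    (by simp; omega)
  have hfy : f {y} = 0 := sub0 {y} (Finset.singleton_subset_iff.mpr hy) ⟨y, by simp⟩
    (by simp; omega)
  have hfxy : f {x, y} = 0 := by
    refine sub0 {x, y} ?_ ⟨x, by simp⟩ ?_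
    · intro a ha
      rcases Finset.mem_insert.mp ha with rfl | ha
      · exact hx
      · rw [Finset.mem_singleton.mp ha]; exact hy
    · have : ({x, y} : Finset (Fin n)).card ≤ 2 := Finset.card_insert_le _ _ |>.trans (by simp)
      omega
  have hsplit : relT1 (f {x}) (f {y}) (f ({x, y}ᶜ)) := by
    refine hf {x} {y} ({x, y}ᶜ) (by simp [Ne.symm hxy, hxy]) ?_ ?_ ?_
    · exact Finset.disjoint_left.mpr (fun a ha hac =>
        (Finset.mem_compl.mp hac) (by simp [Finset.mem_singleton.mp ha]))
    · exact Finset.disjoint_left.mpr (fun a ha hac =>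
        (Finset.mem_compl.mp hac) (by simp [Finset.mem_singleton.mp ha]))
    · rw [show ({x} : Finset (Fin n)) ∪ {y} = {x, y} by rfl, Finset.union_compl]
  rw [hfx, hfy] at hsplit
  have h12 := relT1_elim hsplit
  have hpair := pair {x, y}
  rw [hfxy] at hpair
  have := relT1_elim hpair
  omega
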